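/- Let V_{β,n} : ℕ_{>0} × ℕ → ℝ be defined recursively by V_{β,0}(a,z) = 0 and V_{β,n}(a,z) = a + 1/2 + min(λ + β V_{β,n-1}(1,0), βμ V_{β,n-1}(z+1,0) + β(1-μ) V_{β,n-1}(a+1,z+1)), where β ∈ (0,1), μ ∈ (0,1), λ > 0. Then for every n ≥ 0 and every fixed z, the map a ↦ V_{β,n}(a,z) is monotonically non-decreasing. -/

import Mathlib

/-- The value-iteration functions V_{β,n} are monotone
    non-decreasing in the age coordinate a (for each fixed z). -/
theorem value_iter_monotone_age (β μ lam : ℝ)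
    (hβ : β ∈ Set.Ioo (0 : ℝ) 1) (hμ : μ ∈ Set.Ioo (0 : ℝ) 1) (hlam : 0 < lam)
    (V : ℕ → ℕ → ℕ → ℝ)
    (hV0 : ∀ a z, V 0 a z = 0)
    (hV : ∀ n a z, V (n + 1) a z
      = (a : ℝ) + 1 / 2
        + min (lam + β * V n 1 0)
            (β * μ * V n (z + 1) 0 + β * (1 - μ) * V n (a + 1) (z + 1))) :
    ∀ n z a a', 1 ≤ a → a ≤ a' → V n a z ≤ V n a' z := by
  intro n
  induction n with
  | zero => intro z a a' _ _; simp [hV0]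
  | succ n ih =>
    intro z a a' ha haa'
    rw [hV, hV]
    have h1 : (a : ℝ) + 1 / 2 ≤ (a' : ℝ) + 1 / 2 := by
      have : (a : ℝ) ≤ (a' : ℝ) := by exact_mod_cast haa'
      linarith
    have h2 : V n (a + 1) (z + 1) ≤ V n (a' + 1) (z + 1) :=
      ih (z + 1) (a + 1) (a' + 1) (by omega) (by omega)
    have hβμ : 0 ≤ β * (1 - μ) := by
      have := hβ.1; have := hμ.2; nlinarith
    have h3 : β * (1 - μ) * V n (a + 1) (z + 1) ≤ β * (1 - μ) * V n (a' + 1) (z + 1) :=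
      mul_le_mul_of_nonneg_left h2 hβμ
    have := min_le_min (le_refl (lam + β * V n 1 0))
      (add_le_add (le_refl (β * μ * V n (z + 1) 0)) h3)
    linarith
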